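/- For every function π : s → t between finite sets, let D_π := ∐_{i ∈ t} Fin(–, π⁻¹(i)) be the associated Dirichlet functor. Then the map D_π(0!) : D_π(1) → D_π(0) induced by applying D_π to the unique function 0 → 1 is isomorphic, as an object of the arrow category of FintypeCat, to π itself. Conversely, every Dirichlet functor D is isomorphic to D_{π_D}, where π_D := D(0!) : D(1) → D(0). Hence isomorphism classes of Dirichlet functors correspond bijectively to isomorphism classes of functions between finite sets. -/

import Mathlib

/- STATEMENT 4: For every function `π : s → t` between finite sets, let
`D_π := ∐_{i ∈ t} Fin(–, π⁻¹(i))` be the associated Dirichlet functor. Then the map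
`D_π(0!) : D_π(1) → D_π(0)` is isomorphic, as an object of the arrow category of `FintypeCat`,
to `π` itself. Conversely, every Dirichlet functor `D` is isomorphic to `D_{π_D}` where
`π_D := D(0!) : D(1) → D(0)`. Hence isomorphism classes of Dirichlet functors correspond
bijectively to isomorphism classes of functions between finite sets. -/

open CategoryTheory CategoryTheory.Limits Opposite

noncomputable section

noncomputable instance (X Y : FintypeCat.{0}) : Fintype (X ⟶ Y) := by
  classical
  letI := @FintypeCat.fintype X
  letI := @FintypeCat.fintype Y
  exact Fintype.ofSurjective FintypeCat.homMk (fun f => ⟨f, by ext; rfl⟩)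

/-- The finite coproduct `∐ᵢ Fin(–, dᵢ)` of representable presheaves `FintypeCatᵒᵖ ⥤ FintypeCat`. -/
def dirichletSum {I : Type} [Fintype I] (d : I → FintypeCat.{0}) :
    FintypeCat.{0}ᵒᵖ ⥤ FintypeCat.{0} where
  obj X := FintypeCat.of (Σ i, (X.unop ⟶ d i))
  map f := FintypeCat.homMk fun x => ⟨x.1, f.unop ≫ x.2⟩

/-- A Dirichlet functor is a finite coproduct of representable presheaves. -/
def IsDirichlet (D : FintypeCat.{0}ᵒᵖ ⥤ FintypeCat.{0}) : Prop :=
  ∃ (I : Type) (_ : Fintype I) (d : I → FintypeCat.{0}), Nonempty (D ≅ dirichletSum d)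

/-- The empty finite set `0`. -/
abbrev X0 : FintypeCat.{0} := FintypeCat.of PEmpty

/-- A one-element finite set `1`. -/
abbrev X1 : FintypeCat.{0} := FintypeCat.of PUnit

/-- The unique function `0! : 0 → 1`. -/
def zeroToOne : X0 ⟶ X1 := FintypeCat.homMk fun x => x.elim

/-- The fiber `π⁻¹(i)` of a function `π : s → t` over `i ∈ t`, as a finite set. -/
noncomputable def fiber {s t : FintypeCat.{0}} (π : s ⟶ t) (i : t) : FintypeCat.{0} :=
  letI : DecidableEq t := Classical.decEq _
  FintypeCat.of {x : s // π x = i}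

/-- The Dirichlet functor `D_π = ∐_{i ∈ t} Fin(–, π⁻¹(i))` associated to `π : s → t`. -/
noncomputable def Dpi {s t : FintypeCat.{0}} (π : s ⟶ t) : FintypeCat.{0}ᵒᵖ ⥤ FintypeCat.{0} :=
  letI := @FintypeCat.fintype t
  dirichletSum (fun i : t => fiber π i)

-- AUX
def dirichletSumIso {I I' : Type} [Fintype I] [Fintype I'] (d : I → FintypeCat.{0})
    (d' : I' → FintypeCat.{0}) (σ : I ≃ I') (e : ∀ i, d i ≅ d' (σ i)) :
    dirichletSum d ≅ dirichletSum d' :=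
  NatIso.ofComponents
    (fun X => FintypeCat.equivEquivIso
      (Equiv.sigmaCongr σ (fun i => (Iso.refl X.unop).homCongr (e i))))
    (fun f => FintypeCat.hom_ext _ _ fun _ => rfl)

/-- Fiber equivalence from a commuting square of isos. -/
def fiberEquiv {s t s' t' : FintypeCat.{0}} (π : s ⟶ t) (π' : s' ⟶ t')
    (a : s ≅ s') (b : t ≅ t') (w : ∀ x, π' (a.hom x) = b.hom (π x)) (i : t) :
    fiber π i ≃ fiber π' (b.hom i) where
  toFun x := ⟨a.hom x.1, by rw [w, x.2]⟩
  invFun y := ⟨a.inv y.1, by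
    have h1 : π' (a.hom (a.inv y.1)) = b.hom (π (a.inv y.1)) := w _
    rw [FintypeCat.inv_hom_id_apply] at h1
    have h2 : b.hom (π (a.inv y.1)) = b.hom i := by rw [← h1, y.2]
    have := congrArg b.inv h2
    rwa [FintypeCat.hom_inv_id_apply, FintypeCat.hom_inv_id_apply] at this⟩
  left_inv x := Subtype.ext (FintypeCat.hom_inv_id_apply a x.1)
  right_inv y := Subtype.ext (FintypeCat.inv_hom_id_apply a y.1)

/-- `Dpi` sends isomorphic arrows to isomorphic functors. -/
def DpiIso {s t s' t' : FintypeCat.{0}} (π : s ⟶ t) (π' : s' ⟶ t')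
    (a : s ≅ s') (b : t ≅ t') (w : ∀ x, π' (a.hom x) = b.hom (π x)) :
    Dpi π ≅ Dpi π' :=
  letI := @FintypeCat.fintype t
  letI := @FintypeCat.fintype t'
  dirichletSumIso _ _ (FintypeCat.equivEquivIso.symm b)
    (fun i => FintypeCat.equivEquivIso (fiberEquiv π π' a b w i))

/-- Part 1 iso. -/
def part1Iso {s t : FintypeCat.{0}} (π : s ⟶ t) :
    Arrow.mk ((Dpi π).map zeroToOne.op) ≅ Arrow.mk π :=
  Arrow.isoMk
    (FintypeCat.equivEquivIso
      ({ toFun := fun x => (x.2 PUnit.unit).1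
         invFun := fun y => ⟨π y, FintypeCat.homMk fun _ => ⟨y, rfl⟩⟩
         left_inv := by
           rintro ⟨i, f⟩
           have hf : f = FintypeCat.homMk fun _ => f PUnit.unit := FintypeCat.hom_ext _ _ fun u => by cases u; rfl
           rw [hf]
           generalize f PUnit.unit = x
           obtain ⟨v, hv⟩ := x
           subst hv
           rfl
         right_inv := fun y => rfl } : (Σ i : t, (X1 ⟶ fiber π i)) ≃ s))
    (FintypeCat.equivEquivIso
      ({ toFun := Sigma.fst
         invFun := fun i => ⟨i, FintypeCat.homMk fun x => x.elim⟩
         left_inv := by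
           rintro ⟨i, f⟩
           exact congrArg (Sigma.mk i) (FintypeCat.hom_ext _ _ fun x => x.elim)
         right_inv := fun i => rfl } : (Σ i : t, (X0 ⟶ fiber π i)) ≃ t))
    (by
      refine FintypeCat.hom_ext _ _ fun x => ?_
      obtain ⟨i, f⟩ := x
      exact (f PUnit.unit).2)

/-- The canonical iso `dirichletSum d ≅ Dpi ((dirichletSum d).map zeroToOne.op)`. -/
def canonIso {I : Type} [Fintype I] (d : I → FintypeCat.{0}) :
    dirichletSum d ≅ Dpi ((dirichletSum d).map zeroToOne.op) :=
  letI := @FintypeCat.fintype ((dirichletSum d).obj (op X0))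
  dirichletSumIso d _
    ({ toFun := fun i => ⟨i, FintypeCat.homMk fun x => x.elim⟩
       invFun := Sigma.fst
       left_inv := fun i => rfl
       right_inv := by
         rintro ⟨i, f⟩
         exact congrArg (Sigma.mk i) (FintypeCat.hom_ext _ _ fun x => x.elim) } :
        I ≃ ((dirichletSum d).obj (op X0)))
    (fun i => FintypeCat.equivEquivIso
      { toFun := fun y => ⟨⟨i, FintypeCat.homMk fun _ => y⟩,
          congrArg (Sigma.mk i) (FintypeCat.hom_ext _ _ fun x => x.elim)⟩
        invFun := fun z => (show z.1.1 = i from congrArg Sigma.fst z.2) ▸ z.1.2 PUnit.unit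
        left_inv := fun y => rfl
        right_inv := by
          rintro ⟨⟨j, g⟩, h2⟩
          have hj : j = i := congrArg Sigma.fst h2
          subst hj
          refine Subtype.ext (congrArg (Sigma.mk j) ?_)
          refine FintypeCat.hom_ext _ _ fun u => ?_
          cases u
          rfl })

/-- Part 2 iso. -/
def part2Iso (D : FintypeCat.{0}ᵒᵖ ⥤ FintypeCat.{0}) (h : IsDirichlet D) :
    Nonempty (D ≅ Dpi (D.map zeroToOne.op)) := by
  obtain ⟨I, _, d, ⟨φ⟩⟩ := h
  refine ⟨φ ≪≫ canonIso d ≪≫ DpiIso _ _ (φ.app (op X1)).symm (φ.app (op X0)).symm ?_⟩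
  intro x
  exact (ConcreteCategory.congr_hom (φ.inv.naturality zeroToOne.op) x).symm

lemma isDirichlet_Dpi {s t : FintypeCat.{0}} (π : s ⟶ t) : IsDirichlet (Dpi π) :=
  ⟨t, @FintypeCat.fintype t, fun i => fiber π i, ⟨Iso.refl _⟩⟩

/-- Iso in a full subcategory from an iso of underlying objects. -/
def fsIso {C : Type*} [Category C] {P : C → Prop} {X Y : ObjectProperty.FullSubcategory P}
    (e : X.obj ≅ Y.obj) : X ≅ Y :=
  ObjectProperty.isoMk _ e

/-- Arrow iso from a natural iso. -/
def arrowIsoOfNatIso {D D' : FintypeCat.{0}ᵒᵖ ⥤ FintypeCat.{0}} (ψ : D ≅ D') :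
    Arrow.mk (D.map zeroToOne.op) ≅ Arrow.mk (D'.map zeroToOne.op) :=
  Arrow.isoMk (ψ.app (op X1)) (ψ.app (op X0)) (ψ.hom.naturality zeroToOne.op).symm

def skelEquiv : Skeleton (ObjectProperty.FullSubcategory IsDirichlet) ≃ Skeleton (Arrow FintypeCat.{0}) where
  toFun := Quotient.map (fun D => Arrow.mk (D.obj.map zeroToOne.op))
    (fun D D' ⟨ι⟩ => ⟨arrowIsoOfNatIso ((ObjectProperty.ι IsDirichlet).mapIso ι)⟩)
  invFun := Quotient.map (fun f => ⟨Dpi f.hom, isDirichlet_Dpi f.hom⟩)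
    (fun f g ⟨e⟩ => ⟨fsIso (DpiIso f.hom g.hom (Arrow.leftFunc.mapIso e)
      (Arrow.rightFunc.mapIso e) (fun x => ConcreteCategory.congr_hom e.hom.w x))⟩)
  left_inv := by
    refine Quotient.ind fun D => Quotient.sound ?_
    obtain ⟨ψ⟩ := part2Iso D.obj D.property
    exact ⟨fsIso ψ.symm⟩
  right_inv := by
    refine Quotient.ind fun f => Quotient.sound ⟨part1Iso f.hom⟩

theorem dirichlet_equiv_bundles :
    (∀ (s t : FintypeCat.{0}) (π : s ⟶ t),
      Nonempty (Arrow.mk ((Dpi π).map zeroToOne.op) ≅ Arrow.mk π)) ∧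
    (∀ D : FintypeCat.{0}ᵒᵖ ⥤ FintypeCat.{0}, IsDirichlet D →
      Nonempty (D ≅ Dpi (D.map zeroToOne.op))) ∧
    Nonempty (Skeleton (ObjectProperty.FullSubcategory IsDirichlet) ≃ Skeleton (Arrow FintypeCat.{0})) := by
  exact ⟨fun _ _ π => ⟨part1Iso π⟩, part2Iso, ⟨skelEquiv⟩⟩
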